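/- (Small gain theorem, local version) Let Δ be strictly causal and suppose there exist ρ > 0, 0 ≤ γ < 1, β ≥ 0 such that ‖Δ(x)‖_p ≤ γ‖x‖_p + β whenever ‖x‖_p < ρ. Then for any w with ‖w‖_p < (1-γ)ρ - β, the solution y of y = Δ(y) + w satisfies ‖y‖_p ≤ (‖w‖_p + β)/(1-γ) < ρ. -/

import Mathlib

open scoped ENNReal NNReal

/-- The ℓ_p norm of a sequence, valued in `ℝ≥0∞` (sup norm for `p = ∞`). -/
noncomputable def pNorm (p : ℝ≥0∞) {E : Type*} [NormedAddCommGroup E] (x : ℕ → E) : ℝ≥0∞ :=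
  if p = ∞ then ⨆ k, (‖x k‖₊ : ℝ≥0∞)
  else (∑' k, (‖x k‖₊ : ℝ≥0∞) ^ p.toReal) ^ (1 / p.toReal)

/-- Truncation to the first `τ` coordinates. -/
def pTrunc {E : Type*} [Zero E] (τ : ℕ) (x : ℕ → E) : ℕ → E :=
  fun t => if t < τ then x t else 0

lemma rpow_one_div_le_iff {c : ℝ} (hc : 0 < c) {a M : ℝ≥0∞} :
    a ^ (1 / c) ≤ M ↔ a ≤ M ^ c := by
  rw [← ENNReal.rpow_le_rpow_iff hc (x := a ^ (1/c)), ← ENNReal.rpow_mul,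
    one_div_mul_cancel hc.ne', ENNReal.rpow_one]

lemma pNorm_mono {E : Type*} [NormedAddCommGroup E] (p : ℝ≥0∞) {x z : ℕ → E}
    (h : ∀ k, ‖x k‖₊ ≤ ‖z k‖₊) : pNorm p x ≤ pNorm p z := by
  unfold pNorm
  split
  · exact iSup_mono fun k => ENNReal.coe_le_coe.2 (h k)
  · exact ENNReal.rpow_le_rpow
      (ENNReal.tsum_le_tsum fun k =>
        ENNReal.rpow_le_rpow (ENNReal.coe_le_coe.2 (h k)) ENNReal.toReal_nonneg)
      (by positivity)

lemma pNorm_add_le {E : Type*} [NormedAddCommGroup E] {p : ℝ≥0∞} (hp : 1 ≤ p)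
    (x y : ℕ → E) : pNorm p (fun t => x t + y t) ≤ pNorm p x + pNorm p y := by
  unfold pNorm
  split
  · refine iSup_le fun k => ?_
    calc (‖x k + y k‖₊ : ℝ≥0∞) ≤ (‖x k‖₊ : ℝ≥0∞) + ‖y k‖₊ := by
          exact_mod_cast nnnorm_add_le _ _
      _ ≤ _ := add_le_add (le_iSup (fun j => (‖x j‖₊ : ℝ≥0∞)) k)
          (le_iSup (fun j => (‖y j‖₊ : ℝ≥0∞)) k)
  · rename_i hne
    have hc1 : (1:ℝ) ≤ p.toReal := by
      simpa using ENNReal.toReal_mono hne hp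
    have hc0 : (0:ℝ) < p.toReal := lt_of_lt_of_le one_pos hc1
    set c := p.toReal
    set A := (∑' k, (‖x k‖₊ : ℝ≥0∞) ^ c) ^ (1 / c)
    set B := (∑' k, (‖y k‖₊ : ℝ≥0∞) ^ c) ^ (1 / c)
    rw [rpow_one_div_le_iff hc0]
    rw [ENNReal.tsum_eq_iSup_sum]
    refine iSup_le fun s => ?_
    have h1 : (∑ k ∈ s, ((‖x k‖₊ : ℝ≥0∞) + ‖y k‖₊) ^ c) ^ (1/c) ≤ A + B := by
      refine le_trans (ENNReal.Lp_add_le s _ _ hc1) (add_le_add ?_ ?_) <;>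
        exact ENNReal.rpow_le_rpow (ENNReal.sum_le_tsum s) (by positivity)
    rw [rpow_one_div_le_iff hc0] at h1
    refine le_trans (Finset.sum_le_sum fun k _ => ?_) h1
    exact ENNReal.rpow_le_rpow (by exact_mod_cast nnnorm_add_le _ _) hc0.le

lemma pNorm_zero {E : Type*} [NormedAddCommGroup E] {p : ℝ≥0∞} (hp : 1 ≤ p) :
    pNorm p (fun _ => (0:E)) = 0 := by
  unfold pNorm
  split
  · simp
  · rename_i hne
    have hc0 : (0:ℝ) < p.toReal :=
      lt_of_lt_of_le one_pos (by simpa using ENNReal.toReal_mono hne hp)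
    simp [ENNReal.zero_rpow_of_pos hc0, ENNReal.zero_rpow_of_pos (by positivity : (0:ℝ) < 1/p.toReal), hc0]

lemma pNorm_le_of_trunc {E : Type*} [NormedAddCommGroup E] {p : ℝ≥0∞} (hp : 1 ≤ p)
    {x : ℕ → E} {M : ℝ≥0∞} (h : ∀ τ, pNorm p (pTrunc τ x) ≤ M) : pNorm p x ≤ M := by
  unfold pNorm at *
  split
  · rename_i hi
    refine iSup_le fun k => ?_
    have hk := h (k + 1)
    rw [if_pos hi] at hk
    calc (‖x k‖₊ : ℝ≥0∞) = ‖pTrunc (k+1) x k‖₊ := by simp [pTrunc]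
      _ ≤ _ := le_trans (le_iSup (fun j => (‖pTrunc (k+1) x j‖₊ : ℝ≥0∞)) k) hk
  · rename_i hne
    have hc0 : (0:ℝ) < p.toReal :=
      lt_of_lt_of_le one_pos (by simpa using ENNReal.toReal_mono hne hp)
    rw [rpow_one_div_le_iff hc0]
    rw [ENNReal.tsum_eq_iSup_sum]
    refine iSup_le fun s => ?_
    obtain ⟨n, hn⟩ := s.exists_nat_subset_range
    have hτ := h n
    rw [if_neg hne, rpow_one_div_le_iff hc0] at hτ
    refine le_trans ?_ (le_trans (ENNReal.sum_le_tsum (Finset.range n)) hτ)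
    refine le_trans (le_of_eq ?_) (Finset.sum_le_sum_of_subset hn)
    refine Finset.sum_congr rfl fun k hk => ?_
    have : k < n := Finset.mem_range.1 (hn hk)
    simp [pTrunc, this]

/-- A strictly causal operator: the t-th output depends only on inputs 0..t-1. -/
def StrictlyCausal {E F : Type*} (Q : (ℕ → E) → (ℕ → F)) : Prop :=
  ∀ x y : ℕ → E, ∀ t, (∀ s, s < t → x s = y s) → Q x t = Q y t

/-- local small gain theorem: if `Δ` is strictly causal and satisfies
`‖Δ(x)‖_p ≤ γ‖x‖_p + β` for all `‖x‖_p < ρ` with `γ < 1`, then for any `w` with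
`‖w‖_p < (1-γ)ρ - β`, every solution of `y = Δ(y) + w` satisfies
`‖y‖_p ≤ (‖w‖_p + β)/(1-γ) < ρ`. -/
theorem local_small_gain {E : Type*} [NormedAddCommGroup E]
    (p : ℝ≥0∞) (hp : 1 ≤ p)
    (Δ : (ℕ → E) → (ℕ → E)) (hΔc : StrictlyCausal Δ)
    (ρ : ℝ≥0∞) (hρ : 0 < ρ)
    (γ β : ℝ≥0) (hγ : γ < 1)
    (hΔ : ∀ x : ℕ → E, pNorm p x < ρ → pNorm p (Δ x) ≤ γ * pNorm p x + β)
    (w : ℕ → E) (hw : pNorm p w < (1 - (γ : ℝ≥0∞)) * ρ - β) :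
    ∀ y : ℕ → E, (∀ t, y t = Δ y t + w t) →
      pNorm p y ≤ (pNorm p w + β) / (1 - (γ : ℝ≥0∞)) ∧ pNorm p y < ρ := by
  intro y hy
  have hγ1 : (γ : ℝ≥0∞) < 1 := ENNReal.coe_lt_one_iff.2 hγ
  have h1γ0 : (1 : ℝ≥0∞) - γ ≠ 0 := (tsub_pos_of_lt hγ1).ne'
  have h1γtop : (1 : ℝ≥0∞) - γ ≠ ∞ := by
    exact ne_top_of_le_ne_top ENNReal.one_ne_top tsub_le_self
  -- from hw : ‖w‖ < (1-γ)ρ - β we get ‖w‖ + β < (1-γ)ρ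
  have hwβ : pNorm p w + (β : ℝ≥0∞) < (1 - (γ : ℝ≥0∞)) * ρ :=
    (ENNReal.cancel_of_ne ENNReal.coe_ne_top).lt_tsub_iff_right.1 hw
  set M : ℝ≥0∞ := (pNorm p w + β) / (1 - (γ : ℝ≥0∞)) with hM
  have hMρ : M < ρ := by
    rw [hM, ENNReal.div_lt_iff (Or.inl h1γ0) (Or.inl h1γtop)]
    rwa [mul_comm] at hwβ
  have hcancel : (1 - (γ : ℝ≥0∞)) * M = pNorm p w + β := by
    rw [hM, ENNReal.mul_div_cancel h1γ0 h1γtop]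
  have hsum : (γ : ℝ≥0∞) * M + (1 - (γ : ℝ≥0∞)) * M = M := by
    rw [← add_mul, add_tsub_cancel_of_le hγ1.le, one_mul]
  have key : ∀ τ, pNorm p (pTrunc τ y) ≤ M := by
    intro τ
    induction τ with
    | zero =>
      have : pTrunc 0 y = fun _ => (0 : E) := by
        funext t; simp [pTrunc]
      rw [this, pNorm_zero hp]
      exact zero_le
    | succ τ ih =>
      have hlt : pNorm p (pTrunc τ y) < ρ := lt_of_le_of_lt ih hMρ
      have hΔb := hΔ _ hlt
      have h1 : pNorm p (pTrunc (τ+1) y) ≤ pNorm p (Δ (pTrunc τ y)) + pNorm p w := by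
        have he : pTrunc (τ+1) y =
            fun t => pTrunc (τ+1) (Δ y) t + pTrunc (τ+1) w t := by
          funext t
          by_cases ht : t < τ + 1 <;> simp [pTrunc, ht, hy t]
        calc pNorm p (pTrunc (τ+1) y)
            ≤ pNorm p (pTrunc (τ+1) (Δ y)) + pNorm p (pTrunc (τ+1) w) := by
              rw [he]; exact pNorm_add_le hp _ _
          _ ≤ pNorm p (Δ (pTrunc τ y)) + pNorm p w := by
              refine add_le_add (pNorm_mono p fun k => ?_) (pNorm_mono p fun k => ?_)
              · by_cases hk : k < τ + 1
                · have : Δ y k = Δ (pTrunc τ y) k := by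
                    refine hΔc y (pTrunc τ y) k fun s hs => ?_
                    have : s < τ := lt_of_lt_of_le hs (Nat.lt_succ_iff.1 hk)
                    simp [pTrunc, this]
                  simp [pTrunc, hk, this]
                · simp [pTrunc, hk]
              · by_cases hk : k < τ + 1 <;> simp [pTrunc, hk]
      calc pNorm p (pTrunc (τ+1) y)
          ≤ ((γ : ℝ≥0∞) * pNorm p (pTrunc τ y) + β) + pNorm p w :=
            le_trans h1 (add_le_add hΔb le_rfl)
        _ ≤ ((γ : ℝ≥0∞) * M + β) + pNorm p w := by
            gcongr
        _ = (γ : ℝ≥0∞) * M + (pNorm p w + β) := by ring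
        _ = (γ : ℝ≥0∞) * M + (1 - (γ : ℝ≥0∞)) * M := by rw [hcancel]
        _ = M := hsum
  have hle : pNorm p y ≤ M := pNorm_le_of_trunc hp key
  exact ⟨hle, lt_of_le_of_lt hle hMρ⟩
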